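/- Chord-length formula: for every continuous γ : ℝ → ℝ and all s, s' ∈ ℝ, the squared chord length of the reconstructed curve satisfies |Γ(s) − Γ(s')|² = ∫_{s'}^{s} ∫_{s'}^{s} cos β(ξ,ξ') dξ dξ'. -/

import Mathlib

open MeasureTheory intervalIntegral

/-- `β(s₂,s₁) = ∫_{s₁}^{s₂} γ(ξ) dξ`. -/
noncomputable def curvInt (γ : ℝ → ℝ) (s₂ s₁ : ℝ) : ℝ := ∫ ξ in s₁..s₂, γ ξ

/-- First component of the curve reconstructed from the signed curvature `γ`. -/
noncomputable def curveX (γ : ℝ → ℝ) (s : ℝ) : ℝ :=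
  ∫ ξ in (0:ℝ)..s, Real.cos (curvInt γ ξ 0)

/-- Second component of the curve reconstructed from the signed curvature `γ`. -/
noncomputable def curveY (γ : ℝ → ℝ) (s : ℝ) : ℝ :=
  -∫ ξ in (0:ℝ)..s, Real.sin (curvInt γ ξ 0)

/-- the squared chord length of the reconstructed curve is the double
integral of `cos β(ξ,ξ')`:
`|Γ(s) − Γ(s')|² = ∫_{s'}^{s} ∫_{s'}^{s} cos β(ξ,ξ') dξ dξ'`. -/
theorem chord_length_sq (γ : ℝ → ℝ) (hγ : Continuous γ) (s s' : ℝ) :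
    (curveX γ s - curveX γ s') ^ 2 + (curveY γ s - curveY γ s') ^ 2 =
      ∫ ξ in s'..s, (∫ ξ' in s'..s, Real.cos (curvInt γ ξ ξ')) := by
  have hA : Continuous fun ξ => curvInt γ ξ 0 :=
    intervalIntegral.continuous_primitive (fun a b => hγ.intervalIntegrable a b) 0
  set A : ℝ → ℝ := fun ξ => curvInt γ ξ 0 with hAdef
  have hf : Continuous fun ξ => Real.cos (A ξ) := Real.continuous_cos.comp hA
  have hg : Continuous fun ξ => Real.sin (A ξ) := Real.continuous_sin.comp hA
  set C : ℝ := ∫ ξ in s'..s, Real.cos (A ξ) with hC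
  set S : ℝ := ∫ ξ in s'..s, Real.sin (A ξ) with hS
  have hX : curveX γ s - curveX γ s' = C :=
    intervalIntegral.integral_interval_sub_left (hf.intervalIntegrable 0 s)
      (hf.intervalIntegrable 0 s')
  have hY : curveY γ s - curveY γ s' = -S := by
    have : (∫ ξ in (0:ℝ)..s, Real.sin (A ξ)) - (∫ ξ in (0:ℝ)..s', Real.sin (A ξ)) = S :=
      intervalIntegral.integral_interval_sub_left (hg.intervalIntegrable 0 s)
      (hg.intervalIntegrable 0 s')
    simp only [curveY]
    rw [← this]; ring
  have hsub : ∀ ξ ξ' : ℝ, curvInt γ ξ ξ' = A ξ - A ξ' := by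
    intro ξ ξ'
    simp only [hAdef, curvInt]
    exact (intervalIntegral.integral_interval_sub_left (hγ.intervalIntegrable 0 ξ)
      (hγ.intervalIntegrable 0 ξ')).symm
  have hinner : ∀ ξ : ℝ, (∫ ξ' in s'..s, Real.cos (curvInt γ ξ ξ')) =
      Real.cos (A ξ) * C + Real.sin (A ξ) * S := by
    intro ξ
    have h1 : ∀ ξ' : ℝ, Real.cos (curvInt γ ξ ξ') =
        Real.cos (A ξ) * Real.cos (A ξ') + Real.sin (A ξ) * Real.sin (A ξ') := by
      intro ξ'; rw [hsub, Real.cos_sub]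
    rw [intervalIntegral.integral_congr (g := fun ξ' =>
      Real.cos (A ξ) * Real.cos (A ξ') + Real.sin (A ξ) * Real.sin (A ξ'))
      (fun ξ' _ => h1 ξ'),
      intervalIntegral.integral_add (f := fun ξ' => Real.cos (A ξ) * Real.cos (A ξ')) (g := fun ξ' => Real.sin (A ξ) * Real.sin (A ξ')) (((continuous_const.mul hf)).intervalIntegrable s' s)
      (((continuous_const.mul hg)).intervalIntegrable s' s),
      intervalIntegral.integral_const_mul, intervalIntegral.integral_const_mul]
  calc (curveX γ s - curveX γ s') ^ 2 + (curveY γ s - curveY γ s') ^ 2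
      = C * C + S * S := by rw [hX, hY]; ring
    _ = ∫ ξ in s'..s, (Real.cos (A ξ) * C + Real.sin (A ξ) * S) := by
        rw [intervalIntegral.integral_add (f := fun ξ => Real.cos (A ξ) * C) (g := fun ξ => Real.sin (A ξ) * S) ((hf.mul continuous_const).intervalIntegrable s' s)
          ((hg.mul continuous_const).intervalIntegrable s' s),
          intervalIntegral.integral_mul_const, intervalIntegral.integral_mul_const]
    _ = ∫ ξ in s'..s, (∫ ξ' in s'..s, Real.cos (curvInt γ ξ ξ')) := by
        simp only [hinner]
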